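/- Let (Ω,𝒜,P) and (Θ,𝒯,Π) be probability spaces, let L : Θ × Ω → [0,∞) be jointly measurable with ∫_Ω L(θ,ω) dP(ω) ≤ 1 for every θ ∈ Θ, and let v > 0, C > 0. Suppose U ∈ 𝒯 satisfies Π(U) > 0, that for Π(·|U)-almost every θ the function L(θ,·) is P-almost surely positive, that (θ,ω) ↦ log L(θ,ω) is square-integrable with respect to Π(·|U) ⊗ P, and that for Π(·|U)-almost every θ: ∫_Ω log L(θ,ω) dP(ω) ≥ −v and Var_P(log L(θ,·)) ≤ v. Then for every A ∈ 𝒯 and every t > 0: P( { ω : ∫_A L(θ,ω) dΠ(θ) ≥ t · ∫_Θ L(θ,ω) dΠ(θ) } ) ≤ 1/(C²·v) + exp((1+C)v)·Π(A) / (t·Π(U)). -/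

import Mathlib

open MeasureTheory ProbabilityTheory
open scoped ENNReal

private lemma sq_integral_le_aux {α : Type*} [MeasurableSpace α] {μ : Measure α}
    [IsProbabilityMeasure μ] {h : α → ℝ} (h1 : Integrable h μ)
    (h2 : Integrable (fun x => h x ^ 2) μ) :
    (∫ x, h x ∂μ) ^ 2 ≤ ∫ x, h x ^ 2 ∂μ := by
  have hm : MemLp h 2 μ := (memLp_two_iff_integrable_sq h1.aestronglyMeasurable).2 h2
  have h0 := variance_nonneg h μ
  rw [variance_eq_sub hm] at h0
  have h0' : 0 ≤ (∫ x, h x ^ 2 ∂μ) - (∫ x, h x ∂μ) ^ 2 := by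
    simpa [Pi.pow_apply] using h0
  linarith

theorem stmt_6 {Ω Θ : Type*} [MeasurableSpace Ω] [MeasurableSpace Θ]
    (P : Measure Ω) [IsProbabilityMeasure P]
    (Pri : Measure Θ) [IsProbabilityMeasure Pri]
    (L : Θ × Ω → ℝ) (hLmeas : Measurable L) (hL0 : ∀ p, 0 ≤ L p)
    (hLint : ∀ θ : Θ, ∫⁻ ω, ENNReal.ofReal (L (θ, ω)) ∂P ≤ 1)
    (v C : ℝ) (hv : 0 < v) (hC : 0 < C)
    (U : Set Θ) (hU : MeasurableSet U) (hUpos : 0 < Pri U)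
    (hLpos : ∀ᵐ θ ∂(ProbabilityTheory.cond Pri U), ∀ᵐ ω ∂P, 0 < L (θ, ω))
    (hlog2 : MemLp (fun p => Real.log (L p)) 2 ((ProbabilityTheory.cond Pri U).prod P))
    (hmean : ∀ᵐ θ ∂(ProbabilityTheory.cond Pri U), -v ≤ ∫ ω, Real.log (L (θ, ω)) ∂P)
    (hvar : ∀ᵐ θ ∂(ProbabilityTheory.cond Pri U),
      variance (fun ω => Real.log (L (θ, ω))) P ≤ v) :
    ∀ A : Set Θ, MeasurableSet A → ∀ t : ℝ, 0 < t →
      P {ω | ENNReal.ofReal t * ∫⁻ θ, ENNReal.ofReal (L (θ, ω)) ∂Pri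
            ≤ ∫⁻ θ in A, ENNReal.ofReal (L (θ, ω)) ∂Pri}
        ≤ ENNReal.ofReal (1 / (C ^ 2 * v)
            + Real.exp ((1 + C) * v) * (Pri A).toReal / (t * (Pri U).toReal)) := by
  intro A hA t ht
  set Q : Measure Θ := ProbabilityTheory.cond Pri U with hQdef
  haveI hQP : IsProbabilityMeasure Q := cond_isProbabilityMeasure hUpos.ne'
  set f : Θ × Ω → ℝ := fun p => Real.log (L p) with hfdef
  have hfm : Measurable f := hLmeas.log
  have hfsm : StronglyMeasurable f := hfm.stronglyMeasurable
  have hfint : Integrable f (Q.prod P) := hlog2.integrable one_le_two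
  have hfsq : Integrable (fun p => f p ^ 2) (Q.prod P) := hlog2.integrable_sq
  -- the mean function
  set m : Θ → ℝ := fun θ => ∫ ω, f (θ, ω) ∂P with hmdef
  have hmint : Integrable m Q := hfint.integral_prod_left
  have hmsm : StronglyMeasurable m := hfsm.integral_prod_right'
  have hIsq : Integrable (fun θ => ∫ ω, f (θ, ω) ^ 2 ∂P) Q := hfsq.integral_prod_left
  have hslθ : ∀ᵐ θ ∂Q, Integrable (fun ω => f (θ, ω)) P := hfint.prod_right_ae
  have hslθ2 : ∀ᵐ θ ∂Q, Integrable (fun ω => f (θ, ω) ^ 2) P := hfsq.prod_right_ae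
  have hm2int : Integrable (fun θ => m θ ^ 2) Q := by
    refine Integrable.mono' hIsq ((hmsm.measurable.pow_const 2).aestronglyMeasurable) ?_
    filter_upwards [hslθ, hslθ2] with θ h1 h2
    rw [Real.norm_eq_abs, abs_of_nonneg (sq_nonneg _)]
    exact sq_integral_le_aux h1 h2
  have hmmem : MemLp m 2 Q := (memLp_two_iff_integrable_sq hmsm.aestronglyMeasurable).2 hm2int
  -- the function G
  set G : Ω → ℝ := fun ω => ∫ θ, f (θ, ω) ∂Q with hGdef
  have hGsm : StronglyMeasurable G := hfsm.integral_prod_left'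
  have hGint : Integrable G P := hfint.integral_prod_right
  have hJsq : Integrable (fun ω => ∫ θ, f (θ, ω) ^ 2 ∂Q) P := hfsq.integral_prod_right
  have hslω : ∀ᵐ ω ∂P, Integrable (fun θ => f (θ, ω)) Q := hfint.prod_left_ae
  have hslω2 : ∀ᵐ ω ∂P, Integrable (fun θ => f (θ, ω) ^ 2) Q := hfsq.prod_left_ae
  have hG2int : Integrable (fun ω => G ω ^ 2) P := by
    refine Integrable.mono' hJsq ((hGsm.measurable.pow_const 2).aestronglyMeasurable) ?_
    filter_upwards [hslω, hslω2] with ω h1 h2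
    rw [Real.norm_eq_abs, abs_of_nonneg (sq_nonneg _)]
    exact sq_integral_le_aux h1 h2
  have hGmem : MemLp G 2 P := (memLp_two_iff_integrable_sq hGsm.aestronglyMeasurable).2 hG2int
  -- EG
  set EG : ℝ := ∫ ω, G ω ∂P with hEGdef
  have hswap : ∫ θ, m θ ∂Q = EG := integral_integral_swap hfint
  have hEG : -v ≤ EG := by
    rw [← hswap]
    have : (-v : ℝ) = ∫ _θ, (-v : ℝ) ∂Q := by simp
    rw [this]
    exact integral_mono_ae (integrable_const _) hmint hmean
  -- centered kernel
  set K : Θ × Ω → ℝ := fun p => f p - m p.1 with hKdef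
  have hmfst : MemLp (fun p : Θ × Ω => m p.1) 2 (Q.prod P) := by
    have h1 : MemLp m 2 (Measure.map Prod.fst (Q.prod P)) := by
      rwa [Measure.map_fst_prod, measure_univ, one_smul]
    have h2 : AEStronglyMeasurable m (Measure.map Prod.fst (Q.prod P)) := by
      rw [Measure.map_fst_prod, measure_univ, one_smul]
      exact hmsm.aestronglyMeasurable
    exact (memLp_map_measure_iff h2 measurable_fst.aemeasurable).1 h1
  have hKmem : MemLp K 2 (Q.prod P) := hlog2.sub hmfst
  have hKint : Integrable K (Q.prod P) := hKmem.integrable one_le_two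
  have hK2int : Integrable (fun p => K p ^ 2) (Q.prod P) := hKmem.integrable_sq
  have hptwise : ∀ᵐ ω ∂P, (G ω - EG) ^ 2 ≤ ∫ θ, K (θ, ω) ^ 2 ∂Q := by
    filter_upwards [hKint.prod_left_ae, hK2int.prod_left_ae, hslω] with ω h1 h2 h3
    have e : ∫ θ, K (θ, ω) ∂Q = G ω - EG := by
      rw [← hswap]
      exact integral_sub h3 hmint
    calc (G ω - EG) ^ 2 = (∫ θ, K (θ, ω) ∂Q) ^ 2 := by rw [e]
      _ ≤ ∫ θ, K (θ, ω) ^ 2 ∂Q := sq_integral_le_aux h1 h2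
  have hswap2 : ∫ θ, (∫ ω, K (θ, ω) ^ 2 ∂P) ∂Q = ∫ ω, (∫ θ, K (θ, ω) ^ 2 ∂Q) ∂P :=
    integral_integral_swap hK2int
  have hperθ : ∀ᵐ θ ∂Q, ∫ ω, K (θ, ω) ^ 2 ∂P ≤ v := by
    filter_upwards [hslθ, hslθ2, hvar] with θ h1 h2 h3
    have memθ : MemLp (fun ω => f (θ, ω)) 2 P :=
      (memLp_two_iff_integrable_sq h1.aestronglyMeasurable).2 h2
    have hveq : variance (fun ω => f (θ, ω)) P = ∫ ω, K (θ, ω) ^ 2 ∂P := by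
      rw [variance_eq_integral memθ.aemeasurable]
    rw [← hveq]
    exact h3
  have hVar : variance G P ≤ v := by
    have hveqG : variance G P = ∫ ω, (G ω - EG) ^ 2 ∂P := by
      rw [variance_eq_integral hGmem.aemeasurable]
    rw [hveqG]
    have hGEint : Integrable (fun ω => (G ω - EG) ^ 2) P :=
      (hGmem.sub (memLp_const EG)).integrable_sq
    calc ∫ ω, (G ω - EG) ^ 2 ∂P
        ≤ ∫ ω, (∫ θ, K (θ, ω) ^ 2 ∂Q) ∂P :=
          integral_mono_ae hGEint hK2int.integral_prod_right hptwise
      _ = ∫ θ, (∫ ω, K (θ, ω) ^ 2 ∂P) ∂Q := hswap2.symm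
      _ ≤ ∫ _θ, v ∂Q := integral_mono_ae hK2int.integral_prod_left (integrable_const _) hperθ
      _ = v := by simp
  -- Chebyshev
  have hcheb2 : P {ω | G ω < -(1 + C) * v} ≤ ENNReal.ofReal (1 / (C ^ 2 * v)) := by
    have hCheb : P {ω | C * v ≤ |G ω - EG|}
        ≤ ENNReal.ofReal (variance G P / (C * v) ^ 2) :=
      meas_ge_le_variance_div_sq hGmem (by positivity)
    refine le_trans (measure_mono ?_) (le_trans hCheb (ENNReal.ofReal_le_ofReal ?_))
    · intro ω hω
      simp only [Set.mem_setOf_eq] at hω ⊢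
      rw [le_abs]
      right
      nlinarith
    · calc variance G P / (C * v) ^ 2 ≤ v / (C * v) ^ 2 := by gcongr
        _ = 1 / (C ^ 2 * v) := by field_simp
  -- the numerator N and Markov
  set N : Ω → ℝ≥0∞ := fun ω => ∫⁻ θ in A, ENNReal.ofReal (L (θ, ω)) ∂Pri with hNdef
  have hswmeas : Measurable (fun p : Ω × Θ => ENNReal.ofReal (L (p.2, p.1))) :=
    ENNReal.measurable_ofReal.comp (hLmeas.comp measurable_swap)
  have hNmeas : Measurable N := hswmeas.lintegral_prod_right'
  have hNbound : ∫⁻ ω, N ω ∂P ≤ Pri A := by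
    have hsw : ∫⁻ ω, ∫⁻ θ, ENNReal.ofReal (L (θ, ω)) ∂(Pri.restrict A) ∂P
        = ∫⁻ θ, ∫⁻ ω, ENNReal.ofReal (L (θ, ω)) ∂P ∂(Pri.restrict A) :=
      lintegral_lintegral_swap hswmeas.aemeasurable
    calc ∫⁻ ω, N ω ∂P
        = ∫⁻ θ, ∫⁻ ω, ENNReal.ofReal (L (θ, ω)) ∂P ∂(Pri.restrict A) := hsw
      _ ≤ ∫⁻ _θ, 1 ∂(Pri.restrict A) := lintegral_mono fun θ => hLint θ
      _ = Pri A := by simp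
  set c1 : ℝ≥0∞ :=
    ENNReal.ofReal t * ENNReal.ofReal (Real.exp (-(1 + C) * v)) * Pri U with hc1def
  have hc1ne : c1 ≠ 0 := by
    rw [hc1def]
    refine mul_ne_zero (mul_ne_zero ?_ ?_) hUpos.ne' <;>
      simp [ENNReal.ofReal_eq_zero, not_le, ht, Real.exp_pos]
  have hc1top : c1 ≠ ⊤ := by
    finiteness
  have hMarkov : P {ω | c1 ≤ N ω} ≤ Pri A / c1 := by
    have h := mul_meas_ge_le_lintegral₀ (μ := P) hNmeas.aemeasurable c1
    rw [ENNReal.le_div_iff_mul_le (Or.inl hc1ne) (Or.inl hc1top)]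
    calc P {ω | c1 ≤ N ω} * c1 = c1 * P {ω | c1 ≤ N ω} := mul_comm _ _
      _ ≤ ∫⁻ ω, N ω ∂P := h
      _ ≤ Pri A := hNbound
  -- flip positivity to per-ω
  have hprodpos : ∀ᵐ p : Θ × Ω ∂(Q.prod P), 0 < L p := by
    rw [Measure.ae_prod_iff_ae_ae (measurableSet_lt measurable_const hLmeas)]
    exact hLpos
  have hflip : ∀ᵐ ω ∂P, ∀ᵐ θ ∂Q, 0 < L (θ, ω) := by
    have hsw : ∀ᵐ p : Ω × Θ ∂(P.prod Q), 0 < L (p.2, p.1) := by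
      rw [← Measure.prod_swap]
      exact (ae_map_iff measurable_swap.aemeasurable
        (measurableSet_lt measurable_const (hLmeas.comp measurable_swap))).2 hprodpos
    exact Measure.ae_ae_of_ae_prod hsw
  -- Jensen key claim
  have hkey : ∀ᵐ ω ∂P, -(1 + C) * v ≤ G ω →
      ENNReal.ofReal (Real.exp (-(1 + C) * v)) * Pri U
        ≤ ∫⁻ θ in U, ENNReal.ofReal (L (θ, ω)) ∂Pri := by
    filter_upwards [hslω, hflip] with ω hint hpos hGω
    have hQ : ∫⁻ θ in U, ENNReal.ofReal (L (θ, ω)) ∂Pri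
        = Pri U * ∫⁻ θ, ENNReal.ofReal (L (θ, ω)) ∂Q := by
      rw [hQdef, ProbabilityTheory.cond, lintegral_smul_measure, smul_eq_mul, ← mul_assoc,
        ENNReal.mul_inv_cancel hUpos.ne' (measure_ne_top _ _), one_mul]
    rw [hQ]
    suffices h : ENNReal.ofReal (Real.exp (-(1 + C) * v))
        ≤ ∫⁻ θ, ENNReal.ofReal (L (θ, ω)) ∂Q by
      calc ENNReal.ofReal (Real.exp (-(1 + C) * v)) * Pri U
          = Pri U * ENNReal.ofReal (Real.exp (-(1 + C) * v)) := mul_comm _ _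
        _ ≤ Pri U * ∫⁻ θ, ENNReal.ofReal (L (θ, ω)) ∂Q := mul_le_mul_right h _
    by_cases htop : ∫⁻ θ, ENNReal.ofReal (L (θ, ω)) ∂Q = ⊤
    · rw [htop]; exact le_top
    have hLωm : Measurable (fun θ => L (θ, ω)) :=
      hLmeas.comp (measurable_id.prodMk measurable_const)
    have hLωint : Integrable (fun θ => L (θ, ω)) Q := by
      refine ⟨hLωm.aestronglyMeasurable, ?_⟩
      rw [hasFiniteIntegral_iff_ofReal (Filter.Eventually.of_forall fun θ => hL0 _)]
      exact lt_top_iff_ne_top.2 htop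
    have hexp_eq : (fun θ => Real.exp (f (θ, ω))) =ᵐ[Q] fun θ => L (θ, ω) := by
      filter_upwards [hpos] with θ h
      simp only [hfdef]
      exact Real.exp_log h
    have hexpint : Integrable (fun θ => Real.exp (f (θ, ω))) Q := hLωint.congr hexp_eq.symm
    have hjensen : Real.exp (G ω) ≤ ∫ θ, Real.exp (f (θ, ω)) ∂Q :=
      convexOn_exp.map_integral_le Real.continuous_exp.continuousOn isClosed_univ
        (Filter.Eventually.of_forall fun θ => Set.mem_univ _) hint hexpint
    have h1 : Real.exp (-(1 + C) * v) ≤ ∫ θ, L (θ, ω) ∂Q := by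
      calc Real.exp (-(1 + C) * v) ≤ Real.exp (G ω) := Real.exp_le_exp.2 hGω
        _ ≤ ∫ θ, Real.exp (f (θ, ω)) ∂Q := hjensen
        _ = ∫ θ, L (θ, ω) ∂Q := integral_congr_ae hexp_eq
    calc ENNReal.ofReal (Real.exp (-(1 + C) * v))
        ≤ ENNReal.ofReal (∫ θ, L (θ, ω) ∂Q) := ENNReal.ofReal_le_ofReal h1
      _ = ∫⁻ θ, ENNReal.ofReal (L (θ, ω)) ∂Q :=
        ofReal_integral_eq_lintegral_ofReal hLωint
          (Filter.Eventually.of_forall fun θ => hL0 _)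
  -- assemble
  set B : Set Ω := {ω | -(1 + C) * v ≤ G ω} with hBdef
  set E : Set Ω := {ω | ENNReal.ofReal t * ∫⁻ θ, ENNReal.ofReal (L (θ, ω)) ∂Pri
      ≤ ∫⁻ θ in A, ENNReal.ofReal (L (θ, ω)) ∂Pri} with hEdef
  have hsplit : P E ≤ P (E ∩ B) + P {ω | G ω < -(1 + C) * v} := by
    refine le_trans (measure_mono ?_) (measure_union_le _ _)
    intro ω hω
    by_cases h : -(1 + C) * v ≤ G ω
    · exact Or.inl ⟨hω, h⟩
    · exact Or.inr (not_le.1 h)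
  have hEB : P (E ∩ B) ≤ Pri A / c1 := by
    refine le_trans (measure_mono_ae ?_) hMarkov
    filter_upwards [hkey] with ω hk
    rintro ⟨hE, hB⟩
    show c1 ≤ N ω
    calc c1 = ENNReal.ofReal t * (ENNReal.ofReal (Real.exp (-(1 + C) * v)) * Pri U) := by
          rw [hc1def, mul_assoc]
      _ ≤ ENNReal.ofReal t * ∫⁻ θ in U, ENNReal.ofReal (L (θ, ω)) ∂Pri :=
          mul_le_mul_right (hk hB) _
      _ ≤ ENNReal.ofReal t * ∫⁻ θ, ENNReal.ofReal (L (θ, ω)) ∂Pri :=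
          mul_le_mul_right (setLIntegral_le_lintegral _ _) _
      _ ≤ N ω := hE
  have hUt : 0 < (Pri U).toReal := ENNReal.toReal_pos hUpos.ne' (measure_ne_top Pri U)
  have hUne : (Pri U) = ENNReal.ofReal ((Pri U).toReal) :=
    (ENNReal.ofReal_toReal (measure_ne_top Pri U)).symm
  have hc1eq : c1 = ENNReal.ofReal (t * Real.exp (-(1 + C) * v) * (Pri U).toReal) := by
    rw [ENNReal.ofReal_mul (by positivity), ENNReal.ofReal_mul ht.le, hc1def, ← hUne]
  have hdiv : Pri A / c1 = ENNReal.ofReal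
      (Real.exp ((1 + C) * v) * (Pri A).toReal / (t * (Pri U).toReal)) := by
    have hAeq : Pri A = ENNReal.ofReal ((Pri A).toReal) :=
      (ENNReal.ofReal_toReal (measure_ne_top Pri A)).symm
    rw [hc1eq]
    nth_rewrite 1 [hAeq]
    rw [← ENNReal.ofReal_div_of_pos (by positivity)]
    congr 1
    have hexp : Real.exp (-(1 + C) * v) * Real.exp ((1 + C) * v) = 1 := by
      rw [← Real.exp_add]
      have h0 : -(1 + C) * v + (1 + C) * v = 0 := by ring
      rw [h0, Real.exp_zero]
    rw [div_eq_div_iff (by positivity) (by positivity)]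
    linear_combination (-(Pri A).toReal * t * (Pri U).toReal) * hexp
  calc P E ≤ P (E ∩ B) + P {ω | G ω < -(1 + C) * v} := hsplit
    _ ≤ Pri A / c1 + ENNReal.ofReal (1 / (C ^ 2 * v)) := add_le_add hEB hcheb2
    _ = ENNReal.ofReal (1 / (C ^ 2 * v)
          + Real.exp ((1 + C) * v) * (Pri A).toReal / (t * (Pri U).toReal)) := by
        rw [hdiv, ← ENNReal.ofReal_add (by positivity) (by positivity), add_comm]
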